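/- Consider the simultaneous construction: T^(1) = (2), O^(1) = 22, and iteratively each block of O of size 2 is filled with 1's while blocks of size 1 are filled alternately with 1 and 2 (starting with 1), with T recording the fill letters. If the density d of 1's in T = lim T^(n) exists, then d satisfies the system d_O = (3d − 1)/(2d) and d = (1 − d_O) + d_O/2 where d_O is the density of 1's in O_T; hence d = (1 + √17)/8 and d_O = (7 − √17)/4, so d ≠ d_O. -/

import Mathlib

/-- One step of the simultaneous construction (Program 2): if the current
(0-indexed) `i`-th letter of `O` is 2 the corresponding block is filled with
1,1; otherwise it is a block of size 1 filled with the alternating digit `d`. -/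
def simStep : List ℕ × List ℕ × ℕ → ℕ → List ℕ × List ℕ × ℕ
  | (t, o, d), i =>
    if o.getD i 0 = 2 then (t ++ [1], o ++ [1, 1], d)
    else (t ++ [d], o ++ [d], 3 - d)

/-- State (T, O, next alternating digit) after `n` loop iterations, starting
from T = (2), O = 2,2, d = 1. -/
def simState : ℕ → List ℕ × List ℕ × ℕ
  | 0 => ([2], [2, 2], 1)
  | n + 1 => simStep (simState n) (n + 1)

/-- The n-th letter (1-indexed) of the directing sequence T of the
simultaneous construction. -/
def simT (n : ℕ) : ℕ := (simState n).1.getD (n - 1) 0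

/-- The n-th letter (1-indexed) of the directed sequence O_T of the
simultaneous construction. -/
def simO (n : ℕ) : ℕ := (simState n).2.1.getD (n - 1) 0

/-- Frequency of 1's among the first n letters of f (read at indices 1,…,n). -/
noncomputable def freqOnes (f : ℕ → ℕ) (n : ℕ) : ℝ :=
  ((Finset.Icc 1 n).filter (fun k => f k = 1)).card / n

lemma simStep_fst (p : List ℕ × List ℕ × ℕ) (i : ℕ) :
    ∃ u : List ℕ, (simStep p i).1 = p.1 ++ u := by
  obtain ⟨t, o, d⟩ := p
  simp only [simStep]; split_ifs <;> exact ⟨_, rfl⟩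

lemma simStep_O (p : List ℕ × List ℕ × ℕ) (i : ℕ) :
    ∃ u : List ℕ, (simStep p i).2.1 = p.2.1 ++ u := by
  obtain ⟨t, o, d⟩ := p
  simp only [simStep]; split_ifs <;> exact ⟨_, rfl⟩

lemma prefix_T {m n : ℕ} (h : m ≤ n) : (simState m).1 <+: (simState n).1 := by
  induction n with
  | zero => simp_all
  | succ n ih =>
    rcases Nat.lt_or_ge m (n+1) with h' | h'
    · refine (ih (by omega)).trans ?_
      obtain ⟨u, hu⟩ := simStep_fst (simState n) (n+1)
      exact ⟨u, by rw [← hu]; rfl⟩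
    · have : m = n + 1 := by omega
      subst this; exact List.prefix_rfl

lemma prefix_O {m n : ℕ} (h : m ≤ n) : (simState m).2.1 <+: (simState n).2.1 := by
  induction n with
  | zero => simp_all
  | succ n ih =>
    rcases Nat.lt_or_ge m (n+1) with h' | h'
    · refine (ih (by omega)).trans ?_
      obtain ⟨u, hu⟩ := simStep_O (simState n) (n+1)
      exact ⟨u, by rw [← hu]; rfl⟩
    · have : m = n + 1 := by omega
      subst this; exact List.prefix_rfl

/-- count 1 + count 2 = length for binary lists -/
lemma count_one_two (l : List ℕ) (h : ∀ x ∈ l, x = 1 ∨ x = 2) :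
    l.count 1 + l.count 2 = l.length := by
  induction l with
  | nil => simp
  | cons a l ih =>
    have ha := h a (by simp)
    have := ih (fun x hx => h x (by simp [hx]))
    rcases ha with h1 | h1 <;> subst h1 <;> simp [List.count_cons] <;> omega

def SimInv (n : ℕ) : Prop :=
  ∃ s : ℕ, s ≤ n ∧
    (simState n).1.length = n + 1 ∧
    (simState n).2.1.length = n + s + 2 ∧
    2 * (simState n).1.count 2 + (simState n).2.2 + s = n + 3 ∧
    (simState n).2.1.count 2 = (simState n).1.count 2 + 1 ∧
    ((simState n).2.1.take (n+1)).count 2 = s + 1 ∧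
    ((simState n).2.2 = 1 ∨ (simState n).2.2 = 2) ∧
    (∀ x ∈ (simState n).2.1, x = 1 ∨ x = 2) ∧
    (∀ x ∈ (simState n).1, x = 1 ∨ x = 2)

lemma inv (n : ℕ) : SimInv n := by
  induction n with
  | zero => exact ⟨0, by decide⟩
  | succ n ih =>
    obtain ⟨s, hs, hTl, hOl, hcnt, hO2, htk, hd, hObin, hTbin⟩ := ih
    rcases hst : simState n with ⟨T, O, d⟩
    rw [hst] at hTl hOl hcnt hO2 htk hd hObin hTbin
    simp only at hTl hOl hcnt hO2 htk hd hObin hTbin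
    have hstep : simState (n+1) = simStep (T, O, d) (n+1) := by
      rw [simState, hst]
    have hidx : n + 1 < O.length := by omega
    have hx : O.getD (n+1) 0 = O[n+1] := List.getD_eq_getElem O 0 hidx
    have hxbin : O[n+1] = 1 ∨ O[n+1] = 2 := hObin _ (List.getElem_mem hidx)
    -- take (n+2) of O
    have htake2 : (O.take (n+2)).count 2 = s + 1 + (if O[n+1] = 2 then 1 else 0) := by
      rw [List.take_succ, List.count_append, htk]
      have : O[n+1]? = some O[n+1] := List.getElem?_eq_getElem hidx
      rcases hxbin with h1 | h1 <;> simp [this, h1]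
    by_cases h2 : O.getD (n+1) 0 = 2
    · -- block of size 2
      have hstep2 : simState (n+1) = (T ++ [1], O ++ [1, 1], d) := by
        rw [hstep]; simp only [simStep]; rw [if_pos h2]
      refine ⟨s + 1, by omega, ?_, ?_, ?_, ?_, ?_, ?_, ?_, ?_⟩ <;> rw [hstep2] <;> simp only
      · simp [hTl]
      · simp [hOl]; omega
      · simp [List.count_append]; omega
      · simp [List.count_append]; omega
      · rw [List.take_append_of_le_length (by omega), htake2]
        rw [hx] at h2; simp [h2]
      · exact hd
      · intro x hx'
        rcases List.mem_append.1 hx' with h | h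
        · exact hObin x h
        · simp at h; omega
      · intro x hx'
        rcases List.mem_append.1 hx' with h | h
        · exact hTbin x h
        · simp at h; omega
    · -- block of size 1
      have hx1 : O[n+1] = 1 := by rw [hx] at h2; rcases hxbin with h1 | h1 <;> omega
      have hstep2 : simState (n+1) = (T ++ [d], O ++ [d], 3 - d) := by
        rw [hstep]; simp only [simStep]; rw [if_neg h2]
      refine ⟨s, by omega, ?_, ?_, ?_, ?_, ?_, ?_, ?_, ?_⟩ <;> rw [hstep2] <;> simp only
      · simp [hTl]
      · simp [hOl]; omega
      · rcases hd with h1 | h1 <;> subst h1 <;>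
          simp [List.count_append, List.count_cons] <;> omega
      · rcases hd with h1 | h1 <;> subst h1 <;>
          simp [List.count_append, List.count_cons] <;> omega
      · rw [List.take_append_of_le_length (by omega), htake2]
        simp [hx1]
      · rcases hd with h1 | h1 <;> subst h1 <;> simp
      · intro x hx'
        rcases List.mem_append.1 hx' with h | h
        · exact hObin x h
        · simp at h; omega
      · intro x hx'
        rcases List.mem_append.1 hx' with h | h
        · exact hTbin x h
        · simp at h; omega

lemma getD_of_prefix {l1 l2 : List ℕ} (h : l1 <+: l2) {k : ℕ} (hk : k < l1.length) :
    l2.getD k 0 = l1.getD k 0 := by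
  rw [List.getD_eq_getElem _ _ hk, List.getD_eq_getElem _ _ (lt_of_lt_of_le hk h.length_le)]
  exact (h.getElem hk).symm

def Scnt (n : ℕ) : ℕ := (simState n).2.1.length - (n + 2)
def Dig (n : ℕ) : ℕ := (simState n).2.2
noncomputable def cnt (f : ℕ → ℕ) (n : ℕ) : ℕ :=
  ((Finset.Icc 1 n).filter (fun k => f k = 1)).card

lemma lenT (n : ℕ) : (simState n).1.length = n + 1 := by
  obtain ⟨s, hs, hTl, _⟩ := inv n; exact hTl

lemma lenO (n : ℕ) : (simState n).2.1.length = n + Scnt n + 2 := by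
  obtain ⟨s, hs, hTl, hOl, _⟩ := inv n
  rw [Scnt, hOl]; omega

lemma simT_eq (n k : ℕ) (h1 : 1 ≤ k) (h2 : k ≤ n + 1) :
    simT k = (simState n).1.getD (k - 1) 0 := by
  rcases le_or_gt k n with h | h
  · exact (getD_of_prefix (prefix_T h) (by rw [lenT]; omega)).symm
  · have : k = n + 1 := by omega
    subst this
    exact getD_of_prefix (prefix_T (by omega)) (by rw [lenT]; omega)

lemma simO_eq (n k : ℕ) (h1 : 1 ≤ k) (h2 : k ≤ (simState n).2.1.length) :
    simO k = (simState n).2.1.getD (k - 1) 0 := by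
  rcases le_or_gt k n with h | h
  · exact (getD_of_prefix (prefix_O h) (by rw [lenO]; omega)).symm
  · exact getD_of_prefix (prefix_O (by omega)) (by omega)

lemma cnt_eq_count (f : ℕ → ℕ) (l : List ℕ) (n : ℕ) (hn : n ≤ l.length)
    (hf : ∀ k, 1 ≤ k → k ≤ n → f k = l.getD (k - 1) 0) :
    cnt f n = (l.take n).count 1 := by
  induction n with
  | zero => simp [cnt]
  | succ n ih =>
    have hIcc : Finset.Icc 1 (n+1) = insert (n+1) (Finset.Icc 1 n) := by
      ext k; simp [Finset.mem_Icc, Finset.mem_insert]; omega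
    have hnotmem : (n+1) ∉ Finset.Icc 1 n := by simp
    have hidx : n < l.length := by omega
    have hget : l[n]? = some l[n] := List.getElem?_eq_getElem hidx
    have htake : (l.take (n+1)).count 1 = (l.take n).count 1 + (if l[n] = 1 then 1 else 0) := by
      rw [List.take_succ, List.count_append, hget]
      by_cases h : l[n] = 1 <;>
        simp [h, List.count_singleton', List.count_eq_zero]
    have hfn : f (n+1) = l[n] := by
      rw [hf (n+1) (by omega) le_rfl, Nat.add_sub_cancel, List.getD_eq_getElem _ _ hidx]
    have ihh := ih (by omega) (fun k hk1 hk2 => hf k hk1 (by omega))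
    rw [htake, ← ihh, cnt, cnt, hIcc, Finset.filter_insert]
    by_cases h : l[n] = 1
    · rw [if_pos (by rw [hfn]; exact h), Finset.card_insert_of_notMem (fun hm => hnotmem (Finset.mem_of_mem_filter _ hm))]
      simp [h]
    · rw [if_neg (by rw [hfn]; exact h)]
      simp [h]

lemma F1 (n : ℕ) : 2 * cnt simT (n+1) + 1 = n + Scnt n + Dig n := by
  obtain ⟨s, hs, hTl, hOl, hcnt, hO2, htk, hd, hObin, hTbin⟩ := inv n
  have hSs : Scnt n = s := by rw [Scnt, hOl]; omega
  have hc : cnt simT (n+1) = (simState n).1.count 1 := by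
    rw [cnt_eq_count simT (simState n).1 (n+1) (by rw [hTl])
      (fun k hk1 hk2 => simT_eq n k hk1 hk2)]
    rw [List.take_of_length_le (by rw [hTl])]
  have hb := count_one_two _ hTbin
  rw [hTl] at hb
  rw [hc, hSs, Dig]; omega

lemma F2 (n : ℕ) : cnt simO (n+1) + Scnt n = n := by
  obtain ⟨s, hs, hTl, hOl, hcnt, hO2, htk, hd, hObin, hTbin⟩ := inv n
  have hSs : Scnt n = s := by rw [Scnt, hOl]; omega
  have hc : cnt simO (n+1) = ((simState n).2.1.take (n+1)).count 1 := by
    exact cnt_eq_count simO (simState n).2.1 (n+1) (by omega)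
      (fun k hk1 hk2 => simO_eq n k hk1 (by omega))
  have hb := count_one_two ((simState n).2.1.take (n+1))
    (fun x hx => hObin x (List.mem_of_mem_take hx))
  rw [List.length_take, hOl] at hb
  rw [hc, hSs]; omega

lemma F3 (n : ℕ) : 2 * cnt simO (n + Scnt n + 2) + 1 = n + 3 * Scnt n + Dig n := by
  obtain ⟨s, hs, hTl, hOl, hcnt, hO2, htk, hd, hObin, hTbin⟩ := inv n
  have hSs : Scnt n = s := by rw [Scnt, hOl]; omega
  have hc : cnt simO (n + s + 2) = (simState n).2.1.count 1 := by
    rw [cnt_eq_count simO (simState n).2.1 (n + s + 2) (by omega)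
      (fun k hk1 hk2 => simO_eq n k hk1 (by omega))]
    rw [List.take_of_length_le (by omega)]
  have hb := count_one_two _ hObin
  rw [hOl] at hb
  rw [hSs, hc, Dig]; omega

lemma Dig_bound (n : ℕ) : 1 ≤ Dig n ∧ Dig n ≤ 2 := by
  obtain ⟨s, hs, hTl, hOl, hcnt, hO2, htk, hd, hObin, hTbin⟩ := inv n
  rw [Dig]; omega

open Filter Topology

lemma freq_eq (f : ℕ → ℕ) (n : ℕ) : freqOnes f n = (cnt f n : ℝ) / n := rfl

lemma aux_div_zero (g : ℕ → ℕ) (hg : ∀ n, g n ≤ 1) :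
    Tendsto (fun n : ℕ => (g n : ℝ) / n) atTop (nhds 0) := by
  apply squeeze_zero_norm (a := fun n : ℕ => 1 / (n:ℝ)) _ tendsto_one_div_atTop_nhds_zero_nat
  intro n
  rcases Nat.eq_zero_or_pos n with h | h
  · simp [h]
  · rw [norm_div, Real.norm_natCast, Real.norm_natCast]
    apply div_le_div_of_nonneg_right ?_ ?_ |>.trans_eq rfl
    · exact_mod_cast hg n
    · positivity

lemma tendsto_ratio : Tendsto (fun n : ℕ => ((n:ℝ) + 1) / n) atTop (nhds 1) := by
  have h := tendsto_one_div_atTop_nhds_zero_nat (𝕜 := ℝ)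
  have h2 : Tendsto (fun n : ℕ => 1 + 1 / (n:ℝ)) atTop (nhds (1 + 0)) :=
    tendsto_const_nhds.add h
  rw [add_zero] at h2
  refine h2.congr' ?_
  filter_upwards [eventually_ge_atTop 1] with n hn
  have hn0 : (n:ℝ) ≠ 0 := Nat.cast_ne_zero.2 (by omega)
  field_simp

section Analysis

variable {dT : ℝ} (hdT : Tendsto (freqOnes simT) atTop (nhds dT))

lemma tendsto_cntT_shift (hdT : Tendsto (freqOnes simT) atTop (nhds dT)) :
    Tendsto (fun n : ℕ => (cnt simT (n+1) : ℝ) / ((n:ℝ) + 1)) atTop (nhds dT) := by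
  have h := (tendsto_add_atTop_iff_nat 1).2 hdT
  refine h.congr (fun n => ?_)
  rw [freq_eq]; push_cast; ring_nf

lemma tendsto_S (hdT : Tendsto (freqOnes simT) atTop (nhds dT)) :
    Tendsto (fun n : ℕ => (Scnt n : ℝ) / n) atTop (nhds (2 * dT - 1)) := by
  have h1 := tendsto_cntT_shift hdT
  have h3 : Tendsto (fun n : ℕ => ((1:ℝ) - Dig n) / n) atTop (nhds 0) := by
    apply squeeze_zero_norm (a := fun n : ℕ => 1 / (n:ℝ)) _
      tendsto_one_div_atTop_nhds_zero_nat
    intro n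
    rcases Nat.eq_zero_or_pos n with h | h
    · simp [h]
    · rw [norm_div, Real.norm_natCast]
      have hb := Dig_bound n
      have hb1 : (1:ℝ) ≤ (Dig n : ℝ) := by exact_mod_cast hb.1
      have hb2 : (Dig n : ℝ) ≤ 2 := by exact_mod_cast hb.2
      have hnorm : ‖(1:ℝ) - (Dig n : ℝ)‖ ≤ 1 := by
        rw [Real.norm_eq_abs, abs_le]; constructor <;> linarith
      apply div_le_div_of_nonneg_right hnorm ?_ |>.trans_eq rfl
      positivity
  have hlim : Tendsto
      (fun n : ℕ => 2 * ((cnt simT (n+1) : ℝ) / ((n:ℝ)+1)) * (((n:ℝ)+1)/n)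
        + ((1:ℝ) - Dig n)/n - 1) atTop (nhds (2 * dT * 1 + 0 - 1)) :=
    (((h1.const_mul 2).mul tendsto_ratio).add h3).sub tendsto_const_nhds
  rw [show 2 * dT * 1 + 0 - 1 = 2 * dT - 1 by ring] at hlim
  refine hlim.congr' ?_
  filter_upwards [eventually_ge_atTop 1] with n hn
  have hn0 : (n:ℝ) ≠ 0 := Nat.cast_ne_zero.2 (by omega)
  have hF := F1 n
  have hF' : 2 * (cnt simT (n+1) : ℝ) + 1 = (n:ℝ) + Scnt n + Dig n := by
    exact_mod_cast congrArg (Nat.cast : ℕ → ℝ) hF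
  field_simp
  nlinarith [hF']

lemma tendsto_cntO (hdT : Tendsto (freqOnes simT) atTop (nhds dT)) :
    Tendsto (fun n : ℕ => (cnt simO n : ℝ) / n) atTop (nhds (2 - 2 * dT)) := by
  have hS := tendsto_S hdT
  have h4 : Tendsto (fun n : ℕ => (n:ℝ) / ((n:ℝ) + 1)) atTop (nhds 1) := by
    have h := (tendsto_add_atTop_iff_nat 1).2 (tendsto_one_div_atTop_nhds_zero_nat (𝕜 := ℝ))
    have h2 : Tendsto (fun n : ℕ => 1 - 1 / ((n:ℝ) + 1)) atTop (nhds (1 - 0)) :=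
      tendsto_const_nhds.sub (h.congr (fun n => by push_cast; ring_nf))
    rw [sub_zero] at h2
    refine h2.congr (fun n => ?_)
    have : ((n:ℝ) + 1) ≠ 0 := by positivity
    field_simp
    ring
  rw [← tendsto_add_atTop_iff_nat 1]
  have hlim : Tendsto (fun n : ℕ => (1 - (Scnt n : ℝ)/n) * ((n:ℝ)/((n:ℝ)+1)))
      atTop (nhds ((1 - (2 * dT - 1)) * 1)) := (tendsto_const_nhds.sub hS).mul h4
  rw [show (1 - (2 * dT - 1)) * 1 = 2 - 2 * dT by ring] at hlim
  refine hlim.congr' ?_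
  filter_upwards [eventually_ge_atTop 1] with n hn
  have hn0 : (n:ℝ) ≠ 0 := Nat.cast_ne_zero.2 (by omega)
  have hF : (cnt simO (n+1) : ℝ) + Scnt n = n := by
    exact_mod_cast congrArg (Nat.cast : ℕ → ℝ) (F2 n)
  push_cast
  field_simp
  nlinarith [hF]

end Analysis

lemma tendsto_L : Tendsto (fun n : ℕ => n + Scnt n + 2) atTop atTop :=
  tendsto_atTop_mono (fun n => by simp only [id_eq]; omega) tendsto_id

lemma tendsto_g (hdT : Tendsto (freqOnes simT) atTop (nhds dT)) :
    Tendsto (fun n : ℕ => (cnt simO (n + Scnt n + 2) : ℝ) / ((n:ℝ) + Scnt n + 2))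
      atTop (nhds ((1 + 3 * (2*dT-1)) / (2 + 2 * (2*dT-1)))) := by
  have hS := tendsto_S hdT
  have hα : (0:ℝ) ≤ 2*dT - 1 := ge_of_tendsto' hS (fun n => by positivity)
  have h3 : Tendsto (fun n : ℕ => ((Dig n : ℝ) - 1) / n) atTop (nhds 0) := by
    apply squeeze_zero_norm (a := fun n : ℕ => 1 / (n:ℝ)) _
      tendsto_one_div_atTop_nhds_zero_nat
    intro n
    rcases Nat.eq_zero_or_pos n with h | h
    · simp [h]
    · rw [norm_div, Real.norm_natCast]
      have hb := Dig_bound n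
      have hb1 : (1:ℝ) ≤ (Dig n : ℝ) := by exact_mod_cast hb.1
      have hb2 : (Dig n : ℝ) ≤ 2 := by exact_mod_cast hb.2
      have hnorm : ‖(Dig n : ℝ) - 1‖ ≤ 1 := by
        rw [Real.norm_eq_abs, abs_le]; constructor <;> linarith
      apply div_le_div_of_nonneg_right hnorm ?_ |>.trans_eq rfl
      positivity
  have hinv : Tendsto (fun n : ℕ => 1 / (n:ℝ)) atTop (nhds 0) :=
    tendsto_one_div_atTop_nhds_zero_nat
  have hnum : Tendsto (fun n : ℕ => 1 + 3 * ((Scnt n : ℝ)/n) + ((Dig n : ℝ) - 1)/n)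
      atTop (nhds (1 + 3 * (2*dT-1) + 0)) :=
    (tendsto_const_nhds.add (hS.const_mul 3)).add h3
  have hden : Tendsto (fun n : ℕ => 2 + 2 * ((Scnt n : ℝ)/n) + 4 * (1/(n:ℝ)))
      atTop (nhds (2 + 2 * (2*dT-1) + 4 * 0)) :=
    (tendsto_const_nhds.add (hS.const_mul 2)).add (hinv.const_mul 4)
  have hden0 : (2:ℝ) + 2 * (2*dT-1) + 4 * 0 ≠ 0 := by linarith
  have hlim := hnum.div hden hden0
  rw [show (1:ℝ) + 3 * (2*dT-1) + 0 = 1 + 3 * (2*dT-1) by ring] at hlim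
  rw [show (2:ℝ) + 2 * (2*dT-1) + 4 * 0 = 2 + 2 * (2*dT-1) by ring] at hlim
  refine hlim.congr' ?_
  filter_upwards [eventually_ge_atTop 1] with n hn
  have hn0 : (n:ℝ) ≠ 0 := Nat.cast_ne_zero.2 (by omega)
  have hF : 2 * (cnt simO (n + Scnt n + 2) : ℝ) + 1 = (n:ℝ) + 3 * Scnt n + Dig n := by
    exact_mod_cast congrArg (Nat.cast : ℕ → ℝ) (F3 n)
  have hpos : (0:ℝ) < (n:ℝ) + Scnt n + 2 := by positivity
  rw [Pi.div_apply]
  field_simp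
  nlinarith [hF, hpos, sq_nonneg ((n:ℝ) + Scnt n + 2)]


/-- if the density dT of 1's in the simultaneously constructed
directing sequence T exists, then the density dO of 1's in O_T exists, the
pair satisfies dO = (3dT-1)/(2dT) and dT = (1-dO) + dO/2, whence
dT = (1+√17)/8, dO = (7-√17)/4, and dT ≠ dO. -/
theorem stmt18 (dT : ℝ)
    (hdT : Filter.Tendsto (freqOnes simT) Filter.atTop (nhds dT)) :
    ∃ dO : ℝ, Filter.Tendsto (freqOnes simO) Filter.atTop (nhds dO) ∧
      dO = (3 * dT - 1) / (2 * dT) ∧ dT = (1 - dO) + dO / 2 ∧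
      dT = (1 + Real.sqrt 17) / 8 ∧ dO = (7 - Real.sqrt 17) / 4 ∧ dT ≠ dO := by
  have hα : (0:ℝ) ≤ 2*dT - 1 := ge_of_tendsto' (tendsto_S hdT) (fun n => by positivity)
  -- two limits of the same subsequence
  have hlim1 : Tendsto (fun n : ℕ => (cnt simO (n + Scnt n + 2) : ℝ) / ((n:ℝ) + Scnt n + 2))
      atTop (nhds (2 - 2*dT)) := by
    have := (tendsto_cntO hdT).comp tendsto_L
    refine this.congr (fun n => ?_)
    simp only [Function.comp]
    push_cast; ring_nf
  have heq : (2:ℝ) - 2*dT = (1 + 3 * (2*dT-1)) / (2 + 2 * (2*dT-1)) :=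
    tendsto_nhds_unique hlim1 (tendsto_g hdT)
  have hden : (2:ℝ) + 2 * (2*dT-1) ≠ 0 := by linarith
  have hquad : 4*dT^2 - dT - 1 = 0 := by
    field_simp at heq; nlinarith [heq]
  set r := Real.sqrt 17 with hrdef
  have hr2 : r^2 = 17 := Real.sq_sqrt (by norm_num)
  have hr0 : (0:ℝ) ≤ r := Real.sqrt_nonneg 17
  have hprod : (8*dT - 1 - r) * (8*dT - 1 + r) = 0 := by
    linear_combination 16 * hquad - hr2
  have hdTval : dT = (1 + r) / 8 := by
    rcases mul_eq_zero.1 hprod with h | h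
    · linarith
    · linarith
  refine ⟨2 - 2*dT, ?_, ?_, by ring, hdTval, by linarith, ?_⟩
  · have := tendsto_cntO hdT
    refine this.congr (fun n => ?_)
    rw [freq_eq]
  · rw [eq_div_iff (by intro h; nlinarith)]
    linear_combination -hquad
  · intro h
    have hr13 : r = 13/3 := by linarith [h]
    rw [hr13] at hr2; norm_num at hr2
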